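/- For every finite graph G on n vertices and every graph H with at least 2 vertices, the Italian domination number of the corona G ⊙ H equals 2n. -/

import Mathlib

open SimpleGraph Finset
open scoped Classical

/-- An Italian dominating function: values in {0,1,2}, and every vertex with
value 0 has neighbor values summing to at least 2. -/
def IsItalian {V : Type*} [Fintype V] (G : SimpleGraph V) (f : V → ℕ) : Prop :=
  (∀ v, f v ≤ 2) ∧
    ∀ v, f v = 0 → 2 ≤ ∑ u ∈ Finset.univ.filter (fun w => G.Adj v w), f u

/-- The Italian domination number: minimum weight of an Italian dominating function. -/
noncomputable def italianDomNumber {V : Type*} [Fintype V] (G : SimpleGraph V) : ℕ :=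
  sInf {w | ∃ f : V → ℕ, IsItalian G f ∧ ∑ v, f v = w}

/-- The corona `G ⊙ K₁`: attach one pendant vertex (an `inr` copy) to each vertex of `G`. -/
def coronaK1 {V : Type*} (G : SimpleGraph V) : SimpleGraph (V ⊕ V) :=
  SimpleGraph.fromRel (fun a b =>
    match a, b with
    | Sum.inl u, Sum.inl v => G.Adj u v
    | Sum.inl u, Sum.inr v => u = v
    | Sum.inr u, Sum.inl v => u = v
    | Sum.inr _, Sum.inr _ => False)

/-- The corona `G ⊙ H`: one copy of `H` per vertex of `G`, each joined to that vertex. -/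
def corona {V W : Type*} (G : SimpleGraph V) (H : SimpleGraph W) :
    SimpleGraph (V ⊕ V × W) :=
  SimpleGraph.fromRel (fun a b =>
    match a, b with
    | Sum.inl u, Sum.inl v => G.Adj u v
    | Sum.inl u, Sum.inr p => u = p.1
    | Sum.inr p, Sum.inl v => p.1 = v
    | Sum.inr p, Sum.inr q => p.1 = q.1 ∧ H.Adj p.2 q.2)

lemma corona_adj_inr {V W : Type*} (G : SimpleGraph V) (H : SimpleGraph W)
    (p : V × W) (x : V ⊕ V × W) (h : (corona G H).Adj (Sum.inr p) x) :
    x = Sum.inl p.1 ∨ ∃ q : V × W, x = Sum.inr q ∧ q.1 = p.1 := by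
  rw [corona, SimpleGraph.fromRel_adj] at h
  obtain ⟨hne, h⟩ := h
  cases x with
  | inl v =>
    left
    rcases h with h | h <;> simp_all
  | inr q =>
    right
    refine ⟨q, rfl, ?_⟩
    rcases h with h | h
    · exact h.1.symm
    · exact h.1

theorem italian_corona_eq_two_mul {V W : Type*} [Fintype V] [Fintype W]
    (G : SimpleGraph V) (H : SimpleGraph W) (hW : 2 ≤ Fintype.card W) :
    italianDomNumber (corona G H) = 2 * Fintype.card V := by
  classical
  -- the canonical IDF: 2 on each G-vertex, 0 on copies
  set f0 : V ⊕ V × W → ℕ := fun x => match x with | Sum.inl _ => 2 | Sum.inr _ => 0 with hf0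
  have hf0Italian : IsItalian (corona G H) f0 := by
    constructor
    · intro v; cases v <;> simp [f0]
    · intro v hv
      cases v with
      | inl u => simp [f0] at hv
      | inr p =>
        have hadj : (corona G H).Adj (Sum.inr p) (Sum.inl p.1) := by
          rw [corona, SimpleGraph.fromRel_adj]
          exact ⟨by simp, Or.inl rfl⟩
        calc (2 : ℕ) = f0 (Sum.inl p.1) := rfl
          _ ≤ ∑ u ∈ Finset.univ.filter (fun w => (corona G H).Adj (Sum.inr p) w), f0 u := by
              apply Finset.single_le_sum (fun i _ => Nat.zero_le _)
              simp [hadj]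
  have hsum0 : ∑ v, f0 v = 2 * Fintype.card V := by
    rw [Fintype.sum_sum_type]
    simp [f0, Finset.sum_const, mul_comm]
  have hmem : 2 * Fintype.card V ∈
      {w | ∃ f : V ⊕ V × W → ℕ, IsItalian (corona G H) f ∧ ∑ v, f v = w} :=
    ⟨f0, hf0Italian, hsum0⟩
  apply le_antisymm
  · exact Nat.sInf_le hmem
  · apply le_csInf ⟨_, hmem⟩
    rintro w ⟨f, ⟨hf2, hfdom⟩, rfl⟩
    -- block decomposition
    have hdecomp : ∑ v, f v = ∑ v : V, (f (Sum.inl v) + ∑ w : W, f (Sum.inr (v, w))) := by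
      rw [Fintype.sum_sum_type, Fintype.sum_prod_type, Finset.sum_add_distrib]
    rw [hdecomp]
    have key : ∀ v : V, 2 ≤ f (Sum.inl v) + ∑ w : W, f (Sum.inr (v, w)) := by
      intro v
      by_contra hlt
      push_neg at hlt
      have hblock : f (Sum.inl v) + ∑ w : W, f (Sum.inr (v, w)) ≤ 1 := by omega
      -- find a copy vertex with value 0
      have hexw : ∃ w : W, f (Sum.inr (v, w)) = 0 := by
        by_contra hall
        push_neg at hall
        have : Fintype.card W ≤ ∑ w : W, f (Sum.inr (v, w)) := by
          calc Fintype.card W = ∑ _w : W, 1 := by simp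
            _ ≤ ∑ w : W, f (Sum.inr (v, w)) :=
              Finset.sum_le_sum (fun w _ => Nat.one_le_iff_ne_zero.mpr (hall w))
        omega
      obtain ⟨w, hw0⟩ := hexw
      have h2 := hfdom (Sum.inr (v, w)) hw0
      -- neighbors of inr (v,w) lie in the block
      set B : Finset (V ⊕ V × W) :=
        insert (Sum.inl v) (Finset.univ.image (fun w : W => Sum.inr (v, w))) with hB
      have hsub : Finset.univ.filter (fun x => (corona G H).Adj (Sum.inr (v, w)) x) ⊆ B := by
        intro x hx
        rw [Finset.mem_filter] at hx
        rcases corona_adj_inr G H (v, w) x hx.2 with h | ⟨q, rfl, hq⟩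
        · simp [hB, h]
        · rw [hB, Finset.mem_insert]
          right
          rw [Finset.mem_image]
          exact ⟨q.2, Finset.mem_univ _, by rw [show q = (v, q.2) from Prod.ext hq rfl]⟩
      have hBsum : ∑ x ∈ B, f x = f (Sum.inl v) + ∑ w : W, f (Sum.inr (v, w)) := by
        rw [hB, Finset.sum_insert (by simp), Finset.sum_image (by intro a _ b _ h; simpa using h)]
      have : (2 : ℕ) ≤ ∑ x ∈ B, f x :=
        le_trans h2 (Finset.sum_le_sum_of_subset hsub)
      omega
    calc 2 * Fintype.card V = ∑ _v : V, 2 := by simp [mul_comm]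
      _ ≤ ∑ v : V, (f (Sum.inl v) + ∑ w : W, f (Sum.inr (v, w))) :=
        Finset.sum_le_sum (fun v _ => key v)
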